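/- For every point z in the upper half-plane ℍ there exists a matrix g in Γ₀(2) such that the Möbius image g·z lies in the closed ideal triangle with vertices 0, 1, and ∞, i.e. 0 ≤ Re(g·z) ≤ 1 and |g·z - 1/2| ≥ 1/2. (This is the covering half of the paper's assertion that the ideal triangle {1/0, 0/1, 1/1} is a fundamental domain for the action of G on ℍ².) -/

import Mathlib

open UpperHalfPlane Matrix Matrix.SpecialLinearGroup ModularGroup Complex

/-- The matrix `[[1,-1],[2,-1]]`, an element of `Γ₀(2)` whose isometric circle is
`|2z-1| = 1`. -/
def Wmat : Matrix.SpecialLinearGroup (Fin 2) ℤ :=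
  ⟨!![1, -1; 2, -1], by norm_num [Matrix.det_fin_two_of]⟩

lemma exists_max_even (z : ℍ) : ∃ g : Matrix.SpecialLinearGroup (Fin 2) ℤ,
    Even (g.1 1 0) ∧ ∀ g' : Matrix.SpecialLinearGroup (Fin 2) ℤ,
      Even (g'.1 1 0) → (g' • z).im ≤ (g • z).im := by
  classical
  let s : Set (Fin 2 → ℤ) := {cd | IsCoprime (cd 0) (cd 1) ∧ Even (cd 0)}
  have hs : s.Nonempty := ⟨![0, 1], by
    constructor
    · simpa using isCoprime_zero_left.2 isUnit_one
    · simp⟩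
  obtain ⟨p, hp_mem, hp⟩ :=
    Filter.Tendsto.exists_within_forall_le hs (ModularGroup.tendsto_normSq_coprime_pair z)
  obtain ⟨g, -, hg⟩ := ModularGroup.bottom_row_surj hp_mem.1
  have hge : Even (g.1 1 0) := by
    have : g.1 1 0 = p 0 := by rw [← hg]
    rw [this]; exact hp_mem.2
  refine ⟨g, hge, fun g' hg' => ?_⟩
  rw [ModularGroup.im_smul_eq_div_normSq, ModularGroup.im_smul_eq_div_normSq,
    div_le_div_iff_of_pos_left]
  · simpa [denom_apply, ← hg] using hp (g'.1 1) ⟨ModularGroup.bottom_row_coprime g', hg'⟩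
  · exact z.im_pos
  · exact normSq_denom_pos g' z.im_pos.ne'
  · exact normSq_denom_pos g z.im_pos.ne'

/-- Every point of the upper half-plane can be moved by an element of `Γ₀(2)`
(the subgroup of `SL(2,ℤ)` with even lower-left entry) into the closed ideal
triangle with vertices `0`, `1`, `∞`:
`0 ≤ Re(g·z) ≤ 1` and `|g·z - 1/2| ≥ 1/2`. -/
theorem stmt_2 (z : UpperHalfPlane) :
    ∃ g : Matrix.SpecialLinearGroup (Fin 2) ℤ, Even (g.1 1 0) ∧
      0 ≤ (g • z).re ∧ (g • z).re ≤ 1 ∧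
      (1 : ℝ) / 2 ≤ ‖((g • z : UpperHalfPlane) : ℂ) - 1 / 2‖ := by
  obtain ⟨g₀, hg₀e, hmax⟩ := exists_max_even z
  set n : ℤ := -⌊(g₀ • z).re⌋ with hn
  set g : Matrix.SpecialLinearGroup (Fin 2) ℤ := ModularGroup.T ^ n * g₀ with hgdef
  have hrow : g.1 1 = g₀.1 1 := T_pow_mul_apply_one n g₀
  have hge : Even (g.1 1 0) := by
    have : g.1 1 0 = g₀.1 1 0 := congrFun hrow 0
    rw [this]; exact hg₀e
  have him : (g • z).im = (g₀ • z).im := by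
    rw [hgdef, mul_smul, ModularGroup.im_T_zpow_smul]
  have hre : (g • z).re = (g₀ • z).re + n := by
    rw [hgdef, mul_smul, ModularGroup.re_T_zpow_smul]
  have h0 : 0 ≤ (g • z).re := by
    rw [hre, hn]; push_cast; linarith [Int.floor_le (g₀ • z).re]
  have h1 : (g • z).re < 1 := by
    rw [hre, hn]; push_cast; linarith [Int.lt_floor_add_one (g₀ • z).re]
  refine ⟨g, hge, h0, h1.le, ?_⟩
  by_contra hlt
  push_neg at hlt
  set w : ℍ := g • z with hw
  -- the element `W * g` of `Γ₀(2)`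
  have hWe : Even ((Wmat * g).1 1 0) := by
    obtain ⟨k, hk⟩ := hge
    have hmul : (Wmat * g).1 1 0 = 2 * g.1 0 0 + (-1) * g.1 1 0 := by
      rw [Matrix.SpecialLinearGroup.coe_mul, Matrix.mul_apply, Fin.sum_univ_two]
      norm_num [Wmat]
    exact ⟨g.1 0 0 - k, by rw [hmul, hk]; ring⟩
  have hle : ((Wmat * g) • z).im ≤ (g • z).im := him ▸ hmax _ hWe
  rw [mul_smul, ← hw] at hle
  -- compute the denominator
  have hden : denom (Wmat : Matrix.SpecialLinearGroup (Fin 2) ℤ) w = 2 * (w : ℂ) - 1 := by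
    rw [denom_apply]
    norm_num [Wmat]
    ring
  have habs : ‖2 * (w : ℂ) - 1‖ < 1 := by
    have h2 : (2 : ℂ) * (w : ℂ) - 1 = 2 * ((w : ℂ) - 1 / 2) := by ring
    rw [h2, norm_mul, Complex.norm_two]
    linarith [hlt]
  have hns1 : Complex.normSq (2 * (w : ℂ) - 1) < 1 := by
    rw [← Complex.sq_norm]
    nlinarith [norm_nonneg (2 * (w : ℂ) - 1)]
  have hns0 : 0 < Complex.normSq (2 * (w : ℂ) - 1) := by
    rw [← hden]; exact normSq_denom_pos Wmat w.im_pos.ne'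
  rw [ModularGroup.im_smul_eq_div_normSq, hden] at hle
  have hwim : 0 < w.im := w.im_pos
  rw [div_le_iff₀ hns0] at hle
  nlinarith
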